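/- arXiv:1504.02947 — 5 statements merged into one kernel-verified Lean document; each statement's English description precedes it below -/
import Mathlib

section
/- Let G be a WGA with {q_I} ∈ Obs and let lmax ≥ 1. If Eve wins the DirFix(0,lmax) objective in G, then she also wins the safety objective in the perfect-information game G' (never visiting 𝒰). Explicitly: if λ is a winning strategy for Eve for DirFix(0,lmax) in G, then the strategy λ' defined on finite histories ρ' of G' by λ'(ρ') = λ(obs(supp(ρ'))) (replacing each function f_i in ρ' by the observation containing supp(f_i)) is winning for Eve in the safety game G'. -/
open scoped Classical

/-- A weighted game arena with partial observation. -/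
structure WGA where
  Q : Type
  fintypeQ : Fintype Q
  qI : Q
  A : Type
  fintypeA : Fintype A
  nonemptyA : Nonempty A
  Δ : Q → A → Q → Prop
  total : ∀ q a, ∃ q', Δ q a q'
  w : Q → A → Q → ℤ
  Obs : Set (Set Q)
  obs_empty : ∅ ∉ Obs
  obs_partition : ∀ q : Q, ∃! o, o ∈ Obs ∧ q ∈ o

attribute [instance] WGA.fintypeQ WGA.fintypeA WGA.nonemptyA

namespace WGA

variable (G : WGA)

/-- A concrete path compatible with the given sequences of observations and actions. -/
def Concretizes (obs : ℕ → Set G.Q) (act : ℕ → G.A) (π : ℕ → G.Q) : Prop :=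
  (∀ i, π i ∈ obs i) ∧ ∀ i, G.Δ (π i) (act i) (π (i + 1))

/-- Plays: infinite abstract paths starting at the initial observation. -/
def IsPlay (obs : ℕ → Set G.Q) (act : ℕ → G.A) : Prop :=
  (∀ i, obs i ∈ G.Obs) ∧ G.qI ∈ obs 0 ∧ ∃ π, G.Concretizes obs act π

/-- Sum of the `j` transition weights starting at position `i`. -/
def winSum (π : ℕ → G.Q) (act : ℕ → G.A) (i j : ℕ) : ℤ :=
  ∑ k ∈ Finset.range j, G.w (π (i + k)) (act (i + k)) (π (i + k + 1))

/-- Good window at position `i` with window size bound `lmax`. -/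
def GW (ν : ℚ) (i lmax : ℕ) (π : ℕ → G.Q) (act : ℕ → G.A) : Prop :=
  ∃ j, 1 ≤ j ∧ j ≤ lmax ∧ ν ≤ (G.winSum π act i j : ℚ) / (j : ℚ)

def DirFix (ν : ℚ) (lmax : ℕ) (obs : ℕ → Set G.Q) (act : ℕ → G.A) : Prop :=
  ∀ π, G.Concretizes obs act π → ∀ i, G.GW ν i lmax π act

def UFix (ν : ℚ) (lmax : ℕ) (obs : ℕ → Set G.Q) (act : ℕ → G.A) : Prop :=
  ∃ i, ∀ π, G.Concretizes obs act π → ∀ j, i ≤ j → G.GW ν j lmax π act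

def Fix (ν : ℚ) (lmax : ℕ) (obs : ℕ → Set G.Q) (act : ℕ → G.A) : Prop :=
  ∀ π, G.Concretizes obs act π → ∃ i, ∀ j, i ≤ j → G.GW ν j lmax π act

def UDirBnd (ν : ℚ) (obs : ℕ → Set G.Q) (act : ℕ → G.A) : Prop :=
  ∃ lmax, 1 ≤ lmax ∧ ∀ π, G.Concretizes obs act π → ∀ i, G.GW ν i lmax π act

def DirBnd (ν : ℚ) (obs : ℕ → Set G.Q) (act : ℕ → G.A) : Prop :=
  ∀ π, G.Concretizes obs act π → ∃ lmax, 1 ≤ lmax ∧ ∀ i, G.GW ν i lmax π act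

def UBnd (ν : ℚ) (obs : ℕ → Set G.Q) (act : ℕ → G.A) : Prop :=
  ∃ lmax, 1 ≤ lmax ∧ ∃ i, ∀ π, G.Concretizes obs act π → ∀ j, i ≤ j → G.GW ν j lmax π act

def Bnd (ν : ℚ) (obs : ℕ → Set G.Q) (act : ℕ → G.A) : Prop :=
  ∀ π, G.Concretizes obs act π → ∃ lmax, 1 ≤ lmax ∧ ∃ i, ∀ j, i ≤ j → G.GW ν j lmax π act

noncomputable def MPinf (π : ℕ → G.Q) (act : ℕ → G.A) : ℝ :=
  Filter.liminf (fun n : ℕ => (G.winSum π act 0 n : ℝ) / (n : ℝ)) Filter.atTop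

noncomputable def MPsup (π : ℕ → G.Q) (act : ℕ → G.A) : ℝ :=
  Filter.limsup (fun n : ℕ => (G.winSum π act 0 n : ℝ) / (n : ℝ)) Filter.atTop

def MPInfObj (ν : ℚ) (obs : ℕ → Set G.Q) (act : ℕ → G.A) : Prop :=
  ∀ π, G.Concretizes obs act π → (ν : ℝ) ≤ G.MPinf π act

def MPSupObj (ν : ℚ) (obs : ℕ → Set G.Q) (act : ℕ → G.A) : Prop :=
  ∀ π, G.Concretizes obs act π → (ν : ℝ) ≤ G.MPsup π act

/-- The finite history (prefix) of a play after `n` steps, ending with `obs n`. -/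
def hist (obs : ℕ → Set G.Q) (act : ℕ → G.A) (n : ℕ) : List (Set G.Q × G.A) :=
  (List.range n).map fun i => (obs i, act i)

/-- A play is consistent with an observation-based strategy of Eve. -/
def Consistent (str : List (Set G.Q × G.A) → Set G.Q → G.A)
    (obs : ℕ → Set G.Q) (act : ℕ → G.A) : Prop :=
  ∀ n, act n = str (G.hist obs act n) (obs n)

/-- Eve wins an objective if some observation-based strategy forces it on all plays. -/
def Wins (V : (ℕ → Set G.Q) → (ℕ → G.A) → Prop) : Prop :=
  ∃ str : List (Set G.Q × G.A) → Set G.Q → G.A,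
    ∀ obs act, G.IsPlay obs act → G.Consistent str obs act → V obs act

/-- σ-successors of a set of states. -/
def postSet (σ : G.A) (s : Set G.Q) : Set G.Q := {q' | ∃ q ∈ s, G.Δ q σ q'}

end WGA

namespace WGA

variable (G : WGA)

/-- Elements of the function space 𝓕 (validity constraints are given by `ValidF`). -/
def FMap := G.Q → Option (ℕ → ℤ)

/-- The support of an element of 𝓕. -/
def fsupp (f : FMap G) : Set G.Q := {q | f q ≠ none}

/-- `f(q)_i`, the value of `f` at state `q` and window index `i`. -/
def fval (f : FMap G) (q : G.Q) (i : ℕ) : ℤ := ((f q).getD fun _ => 0) i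

/-- Membership in 𝓕: values at indices `1,…,lmax` lie in `{−W·lmax,…,0}`
(values at other indices are normalized to `0`). -/
def ValidF (lmax W : ℕ) (f : FMap G) : Prop :=
  ∀ q g, f q = some g →
    (∀ i, 1 ≤ i → i ≤ lmax → -((W : ℤ) * (lmax : ℤ)) ≤ g i ∧ g i ≤ 0) ∧
    (∀ i, i = 0 ∨ lmax < i → g i = 0)

def Fset (lmax W : ℕ) : Set (FMap G) := {f | G.ValidF lmax W f}

/-- The set whose minimum is `ζ(q)` in the definition of σ-successor. -/
def zetaSet (f1 : FMap G) (σ : G.A) (q : G.Q) (j : ℕ) : Set ℤ :=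
  if j = 1 then {x | ∃ p ∈ G.fsupp f1, G.Δ p σ q ∧ x = G.w p σ q}
  else {x | ∃ p ∈ G.fsupp f1, G.Δ p σ q ∧ G.fval f1 p (j - 1) < 0 ∧
        x = G.fval f1 p (j - 1) + G.w p σ q}

/-- `v = max(−W·lmax, min(0, min Z))`, where the minimum of the empty set is `+∞`. -/
def succVal (lmax W : ℕ) (Z : Set ℤ) (v : ℤ) : Prop :=
  (Z = ∅ ∧ v = max (-((W : ℤ) * (lmax : ℤ))) 0) ∨
  ∃ z, IsLeast Z z ∧ v = max (-((W : ℤ) * (lmax : ℤ))) (min 0 z)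

/-- `f2` is a σ-successor of `f1`. -/
def IsSucc (lmax W : ℕ) (f1 : FMap G) (σ : G.A) (f2 : FMap G) : Prop :=
  G.ValidF lmax W f2 ∧
  (∃ o ∈ G.Obs, G.fsupp f2 = G.postSet σ (G.fsupp f1) ∩ o) ∧
  ∀ q ∈ G.fsupp f2, ∀ j, 1 ≤ j → j ≤ lmax →
    succVal lmax W (G.zetaSet f1 σ q j) (G.fval f2 q j)

/-- The initial function `f_I`. -/
noncomputable def fI : FMap G := fun q => if q = G.qI then some (fun _ => 0) else none

/-- The unsafe set 𝒰 ⊆ 𝓕. -/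
def FU (lmax W : ℕ) : Set (FMap G) :=
  {f | G.ValidF lmax W f ∧ ∃ q ∈ G.fsupp f, G.fval f q lmax < 0}

/-- The partial order ⪯ on 𝓕. -/
def Preceq (lmax : ℕ) (f g : FMap G) : Prop :=
  G.fsupp f ⊆ G.fsupp g ∧
  ∀ q ∈ G.fsupp f, ∀ i, 1 ≤ i → i ≤ lmax →
    ∃ j, i ≤ j ∧ j ≤ lmax ∧ G.fval g q j ≤ G.fval f q i

/-- Upward-closedness (within 𝓕) with respect to ⪯. -/
def UpClosed (lmax W : ℕ) (S : Set (FMap G)) : Prop :=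
  ∀ f ∈ S, ∀ g ∈ G.Fset lmax W, G.Preceq lmax f g → g ∈ S

/-- Uncontrollable predecessors in the game `G'`. -/
def upreF (lmax W : ℕ) (S : Set (FMap G)) : Set (FMap G) :=
  {p | G.ValidF lmax W p ∧ ∀ σ : G.A, ∃ f2 ∈ S, G.IsSucc lmax W p σ f2}

/-- The set of ⪯-minimal elements of `T`. -/
def minimal (lmax : ℕ) (T : Set (FMap G)) : Set (FMap G) :=
  {x | x ∈ T ∧ ∀ y ∈ T, G.Preceq lmax y x → y = x}

/-- The antichain version ⌊upre⌋ of the uncontrollable-predecessors operator. -/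
def acUpre (lmax W : ℕ) (a : Set (FMap G)) : Set (FMap G) :=
  G.minimal lmax {p | G.ValidF lmax W p ∧ p ∉ G.FU lmax W ∧
    ∀ σ : G.A, ∃ q' ∈ a, ∃ r', G.IsSucc lmax W p σ r' ∧ G.Preceq lmax q' r'}

/-- Upward closure within 𝓕. -/
def upSet (lmax W : ℕ) (T : Set (FMap G)) : Set (FMap G) :=
  {g | g ∈ G.Fset lmax W ∧ ∃ f ∈ T, G.Preceq lmax f g}

/-- Histories of the perfect-information game `G'`. -/
def histP (fs : ℕ → FMap G) (act : ℕ → G.A) (n : ℕ) : List (FMap G × G.A) :=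
  (List.range n).map fun i => (fs i, act i)

/-- The given strategy of Eve is winning for the safety objective of `G'`:
every consistent play (a sequence of σ-successor moves from `f_I`) avoids 𝒰. -/
def WinsSafeP (lmax W : ℕ) (str : List (FMap G × G.A) → FMap G → G.A) : Prop :=
  ∀ fs : ℕ → FMap G, ∀ act : ℕ → G.A,
    fs 0 = G.fI →
    (∀ i, G.IsSucc lmax W (fs i) (act i) (fs (i + 1))) →
    (∀ n, act n = str (G.histP fs act n) (fs n)) →
    ∀ i, fs i ∉ G.FU lmax W

/-- The monotone map `X ↦ 𝒰 ∪ upre(X)` on the powerset lattice of 𝓕. -/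
def safeOp (lmax W : ℕ) : Set (FMap G) →o Set (FMap G) where
  toFun X := G.FU lmax W ∪ G.upreF lmax W X
  monotone' := by
    intro X Y hXY f hf
    rcases hf with hf | hf
    · exact Or.inl hf
    · refine Or.inr ⟨hf.1, fun σ => ?_⟩
      obtain ⟨f2, hf2, hs⟩ := hf.2 σ
      exact ⟨f2, hXY hf2, hs⟩

end WGA

namespace Aux1

lemma fval_fI (G : WGA) (q : G.Q) (i : ℕ) : G.fval G.fI q i = 0 := by
  simp only [WGA.fval, WGA.fI]
  split <;> simp

lemma fsupp_fI (G : WGA) : G.fsupp G.fI = {G.qI} := by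
  ext q
  simp only [WGA.fsupp, WGA.fI, Set.mem_setOf_eq, Set.mem_singleton_iff]
  split <;> simp_all

lemma lemA (G : WGA) (lmax W : ℕ)
    (hW : ∀ p σ q, G.Δ p σ q → |G.w p σ q| ≤ (W : ℤ))
    (fs : ℕ → WGA.FMap G) (act : ℕ → G.A)
    (h0 : fs 0 = G.fI)
    (hsucc : ∀ i, G.IsSucc lmax W (fs i) (act i) (fs (i + 1))) :
    ∀ n q j, q ∈ G.fsupp (fs n) → 1 ≤ j → j ≤ lmax →
      -((W : ℤ) * (j : ℤ)) ≤ G.fval (fs n) q j := by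
  intro n
  induction n with
  | zero =>
    intro q j hq h1 hj
    rw [h0, fval_fI]
    have : (0:ℤ) ≤ (W : ℤ) * (j : ℤ) := by positivity
    linarith
  | succ n ih =>
    intro q j hq h1 hj
    obtain ⟨_, _, hvals⟩ := hsucc n
    have hs := hvals q hq j h1 hj
    have hWl : (0:ℤ) ≤ (W : ℤ) * (j : ℤ) := by positivity
    rcases hs with ⟨_, hv⟩ | ⟨z, hzl, hv⟩
    · rw [hv]
      have := le_max_right (-((W : ℤ) * (lmax : ℤ))) (0:ℤ)
      linarith
    · rw [hv]
      have hzmem := hzl.1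
      have hzlb : -((W : ℤ) * (j : ℤ)) ≤ z := by
        by_cases hj1 : j = 1
        · subst hj1
          simp only [WGA.zetaSet, if_pos rfl, Set.mem_setOf_eq] at hzmem
          obtain ⟨p, hp, hΔ, rfl⟩ := hzmem
          have := hW p (act n) q hΔ
          rw [abs_le] at this
          push_cast
          linarith [this.1]
        · simp only [WGA.zetaSet, if_neg hj1, Set.mem_setOf_eq] at hzmem
          obtain ⟨p, hp, hΔ, hlt, rfl⟩ := hzmem
          have hih := ih p (j - 1) hp (by omega) (by omega)
          have hw := hW p (act n) q hΔ
          rw [abs_le] at hw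
          have hcast : ((j - 1 : ℕ) : ℤ) = (j : ℤ) - 1 := by
            have : 1 ≤ j := h1
            push_cast [Nat.cast_sub this]
            ring
          rw [hcast] at hih
          nlinarith [hw.1]
      have h1' : -((W : ℤ) * (j : ℤ)) ≤ min 0 z := le_min (by linarith) hzlb
      have := le_max_right (-((W : ℤ) * (lmax : ℤ))) (min 0 z)
      linarith

end Aux1
namespace Aux1

lemma lemB (G : WGA) (lmax W : ℕ) (hlmax : 1 ≤ lmax)
    (hW : ∀ p σ q, G.Δ p σ q → |G.w p σ q| ≤ (W : ℤ))
    (fs : ℕ → WGA.FMap G) (act : ℕ → G.A)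
    (h0 : fs 0 = G.fI)
    (hsucc : ∀ i, G.IsSucc lmax W (fs i) (act i) (fs (i + 1))) :
    ∀ j, 1 ≤ j → j ≤ lmax → ∀ n q, q ∈ G.fsupp (fs n) → G.fval (fs n) q j < 0 →
    ∃ m : ℕ, ∃ p : ℕ → G.Q, n = m + j ∧ p j = q ∧
      (∀ k, k ≤ j → p k ∈ G.fsupp (fs (m + k))) ∧
      (∀ k, k < j → G.Δ (p k) (act (m + k)) (p (k + 1))) ∧
      (∀ i, 1 ≤ i → i ≤ j →
        (∑ k ∈ Finset.range i, G.w (p k) (act (m + k)) (p (k + 1))) < 0) ∧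
      G.fval (fs n) q j = ∑ k ∈ Finset.range j, G.w (p k) (act (m + k)) (p (k + 1)) := by
  intro j
  induction j with
  | zero => omega
  | succ j ih =>
    intro _ hjl n q hq hneg
    match n with
    | 0 =>
      rw [h0, fval_fI] at hneg
      omega
    | (n' + 1) =>
      obtain ⟨_, _, hvals⟩ := hsucc n'
      have hs := hvals q hq (j + 1) (by omega) hjl
      have hWlm : (0:ℤ) ≤ (W : ℤ) * (lmax : ℤ) := by positivity
      rcases hs with ⟨_, hv⟩ | ⟨z, hzl, hv⟩
      · exfalso
        have := le_max_right (-((W : ℤ) * (lmax : ℤ))) (0:ℤ)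
        omega
      · have hzneg : z < 0 := by
          by_contra hzge
          push_neg at hzge
          have : min 0 z = 0 := min_eq_left hzge
          rw [this] at hv
          have := le_max_right (-((W : ℤ) * (lmax : ℤ))) (0:ℤ)
          omega
        have hminz : min 0 z = z := min_eq_right (le_of_lt hzneg)
        rw [hminz] at hv
        have hzmem := hzl.1
        rcases Nat.eq_zero_or_pos j with hj0 | hjpos
        · -- base case: window length 1
          subst hj0
          simp only [WGA.zetaSet, if_pos rfl, Set.mem_setOf_eq] at hzmem
          obtain ⟨p₀, hp₀, hΔ, rfl⟩ := hzmem
          have hwb := hW p₀ (act n') q hΔ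
          rw [abs_le] at hwb
          have hWW : (W : ℤ) ≤ (W : ℤ) * (lmax : ℤ) := by
            have : (1:ℤ) ≤ (lmax : ℤ) := by exact_mod_cast hlmax
            nlinarith
          have hveq : G.fval (fs (n' + 1)) q 1 = G.w p₀ (act n') q := by
            rw [hv]
            exact max_eq_right (by linarith [hwb.1])
          refine ⟨n', fun k => if k = 0 then p₀ else q, rfl, by simp, ?_, ?_, ?_, ?_⟩
          · intro k hk
            interval_cases k
            · simpa using hp₀
            · simpa using hq
          · intro k hk
            interval_cases k
            simpa using hΔ
          · intro i h1i hi1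
            interval_cases i
            simp only [Finset.sum_range_one, Nat.add_zero]
            simpa using hzneg
          · simp only [Finset.sum_range_one, Nat.add_zero]
            simpa using hveq
        · -- inductive step
          simp only [WGA.zetaSet, if_neg (by omega : ¬ j + 1 = 1), Set.mem_setOf_eq] at hzmem
          obtain ⟨p₀, hp₀, hΔ, hfneg, rfl⟩ := hzmem
          have hjj : j + 1 - 1 = j := by omega
          rw [hjj] at hv hzneg
          have hA := lemA G lmax W hW fs act h0 hsucc n' p₀ j hp₀ hjpos (by omega)
          have hwb := hW p₀ (act n') q hΔ
          rw [abs_le] at hwb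
          have hz_lb : -((W : ℤ) * ((lmax : ℕ) : ℤ)) ≤ G.fval (fs n') p₀ j + G.w p₀ (act n') q := by
            have hcast : ((j : ℤ) + 1) ≤ (lmax : ℤ) := by exact_mod_cast hjl
            have hW0 : (0:ℤ) ≤ (W : ℤ) := by positivity
            nlinarith [hwb.1]
          have hveq : G.fval (fs (n' + 1)) q (j + 1)
              = G.fval (fs n') p₀ j + G.w p₀ (act n') q := by
            rw [hv]
            exact max_eq_right hz_lb
          obtain ⟨m, phat, hn', hpj, hsupp, hΔc, hsums, heq⟩ :=
            ih hjpos (by omega) n' p₀ hp₀ hfneg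
          refine ⟨m, fun k => if k = j + 1 then q else phat k, by omega, by simp, ?_, ?_, ?_, ?_⟩
          · intro k hk
            by_cases hkj : k = j + 1
            · simp only [hkj, if_pos rfl]
              have hmn : m + (j + 1) = n' + 1 := by omega
              rw [hmn]; exact hq
            · simp only [if_neg hkj]
              exact hsupp k (by omega)
          · intro k hk
            by_cases hkj : k = j
            · have h2 : k + 1 = j + 1 := by omega
              simp only [if_neg (show ¬ k = j + 1 by omega), h2, if_pos rfl]
              have hmn : m + k = n' := by omega
              rw [hmn, hkj, hpj]
              exact hΔ
            · simp only [if_neg (show ¬ k = j + 1 by omega),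
                if_neg (show ¬ k + 1 = j + 1 by omega)]
              exact hΔc k (by omega)
          · intro i h1i hi1
            by_cases hij : i ≤ j
            · have hcong : (∑ k ∈ Finset.range i,
                  G.w ((fun k => if k = j + 1 then q else phat k) k) (act (m + k))
                    ((fun k => if k = j + 1 then q else phat k) (k + 1)))
                  = ∑ k ∈ Finset.range i, G.w (phat k) (act (m + k)) (phat (k + 1)) := by
                refine Finset.sum_congr rfl fun k hk => ?_
                rw [Finset.mem_range] at hk
                simp only [if_neg (show ¬ k = j + 1 by omega),
                  if_neg (show ¬ k + 1 = j + 1 by omega)]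
              rw [hcong]
              exact hsums i h1i hij
            · have hi : i = j + 1 := by omega
              subst hi
              rw [Finset.sum_range_succ]
              have hcong : (∑ k ∈ Finset.range j,
                  G.w ((fun k => if k = j + 1 then q else phat k) k) (act (m + k))
                    ((fun k => if k = j + 1 then q else phat k) (k + 1)))
                  = ∑ k ∈ Finset.range j, G.w (phat k) (act (m + k)) (phat (k + 1)) := by
                refine Finset.sum_congr rfl fun k hk => ?_
                rw [Finset.mem_range] at hk
                simp only [if_neg (show ¬ k = j + 1 by omega),
                  if_neg (show ¬ k + 1 = j + 1 by omega)]
              have hlast : G.w ((fun k => if k = j + 1 then q else phat k) j) (act (m + j))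
                  ((fun k => if k = j + 1 then q else phat k) (j + 1)) = G.w p₀ (act n') q := by
                have hmn : m + j = n' := by omega
                simp only [if_neg (show ¬ j = j + 1 by omega), if_pos rfl, if_true]
                rw [hpj, hmn]
              rw [hcong, hlast, ← heq]
              exact hzneg
          · rw [Finset.sum_range_succ]
            have hcong : (∑ k ∈ Finset.range j,
                G.w ((fun k => if k = j + 1 then q else phat k) k) (act (m + k))
                  ((fun k => if k = j + 1 then q else phat k) (k + 1)))
                = ∑ k ∈ Finset.range j, G.w (phat k) (act (m + k)) (phat (k + 1)) := by
              refine Finset.sum_congr rfl fun k hk => ?_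
              rw [Finset.mem_range] at hk
              simp only [if_neg (show ¬ k = j + 1 by omega),
                if_neg (show ¬ k + 1 = j + 1 by omega)]
            have hlast : G.w ((fun k => if k = j + 1 then q else phat k) j) (act (m + j))
                ((fun k => if k = j + 1 then q else phat k) (j + 1)) = G.w p₀ (act n') q := by
              have hmn : m + j = n' := by omega
              simp only [if_neg (show ¬ j = j + 1 by omega), if_pos rfl, if_true]
              rw [hpj, hmn]
            rw [hcong, hlast, ← heq]
            exact hveq

end Aux1
namespace Aux1

/-- Canonical observation sequence covering the supports. -/
noncomputable def oA (G : WGA) (fs : ℕ → WGA.FMap G) (act : ℕ → G.A) : ℕ → Set G.Q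
  | 0 => {G.qI}
  | (i + 1) =>
      if h : ∃ o, o ∈ G.Obs ∧ G.fsupp (fs (i + 1)) = G.postSet (act i) (G.fsupp (fs i)) ∩ o
      then h.choose else {G.qI}

lemma oA_obs (G : WGA) (fs : ℕ → WGA.FMap G) (act : ℕ → G.A)
    (hqI : ({G.qI} : Set G.Q) ∈ G.Obs) : ∀ t, oA G fs act t ∈ G.Obs := by
  intro t
  cases t with
  | zero => simpa [oA] using hqI
  | succ i =>
    rw [oA]
    split
    · next h => exact h.choose_spec.1
    · exact hqI

lemma oA_supp (G : WGA) (lmax W : ℕ) (fs : ℕ → WGA.FMap G) (act : ℕ → G.A)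
    (h0 : fs 0 = G.fI)
    (hsucc : ∀ i, G.IsSucc lmax W (fs i) (act i) (fs (i + 1))) :
    ∀ t, G.fsupp (fs t) ⊆ oA G fs act t := by
  intro t
  cases t with
  | zero =>
    rw [h0, fsupp_fI, oA]
  | succ i =>
    obtain ⟨_, ⟨o, ho, heq⟩, _⟩ := hsucc i
    have hex : ∃ o, o ∈ G.Obs ∧ G.fsupp (fs (i + 1)) = G.postSet (act i) (G.fsupp (fs i)) ∩ o :=
      ⟨o, ho, heq⟩
    rw [oA, dif_pos hex]
    intro q hq
    rw [hex.choose_spec.2] at hq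
    exact hq.2

lemma pred_exists (G : WGA) (lmax W : ℕ) (fs : ℕ → WGA.FMap G) (act : ℕ → G.A)
    (hsucc : ∀ i, G.IsSucc lmax W (fs i) (act i) (fs (i + 1))) :
    ∀ t q, q ∈ G.fsupp (fs (t + 1)) → ∃ p, p ∈ G.fsupp (fs t) ∧ G.Δ p (act t) q := by
  intro t q hq
  obtain ⟨_, ⟨o, ho, heq⟩, _⟩ := hsucc t
  rw [heq] at hq
  obtain ⟨p, hp, hΔ⟩ := hq.1
  exact ⟨p, hp, hΔ⟩

/-- Backward path through the supports, `Bpath m x0 k` is the state at time `m - k`. -/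
noncomputable def Bpath (G : WGA) (fs : ℕ → WGA.FMap G) (act : ℕ → G.A)
    (m : ℕ) (x0 : G.Q) : ℕ → G.Q
  | 0 => x0
  | (k + 1) =>
      if h : ∃ p, p ∈ G.fsupp (fs (m - k - 1)) ∧
          G.Δ p (act (m - k - 1)) (Bpath G fs act m x0 k) ∧ k < m
      then h.choose else Bpath G fs act m x0 k

lemma Bpath_mem (G : WGA) (lmax W : ℕ) (fs : ℕ → WGA.FMap G) (act : ℕ → G.A)
    (hsucc : ∀ i, G.IsSucc lmax W (fs i) (act i) (fs (i + 1)))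
    (m : ℕ) (x0 : G.Q) (hx0 : x0 ∈ G.fsupp (fs m)) :
    ∀ k, Bpath G fs act m x0 k ∈ G.fsupp (fs (m - k)) := by
  intro k
  induction k with
  | zero => simpa [Bpath] using hx0
  | succ k ih =>
    by_cases hk : k < m
    · have hstep : m - k = (m - k - 1) + 1 := by omega
      rw [hstep] at ih
      obtain ⟨p, hp, hΔ⟩ := pred_exists G lmax W fs act hsucc (m - k - 1) _ ih
      have hex : ∃ p, p ∈ G.fsupp (fs (m - k - 1)) ∧
          G.Δ p (act (m - k - 1)) (Bpath G fs act m x0 k) ∧ k < m := ⟨p, hp, hΔ, hk⟩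
      rw [Bpath, dif_pos hex]
      have : m - (k + 1) = m - k - 1 := by omega
      rw [this]
      exact hex.choose_spec.1
    · have hex : ¬ ∃ p, p ∈ G.fsupp (fs (m - k - 1)) ∧
          G.Δ p (act (m - k - 1)) (Bpath G fs act m x0 k) ∧ k < m := by
        rintro ⟨p, _, _, h⟩; exact hk h
      rw [Bpath, dif_neg hex]
      have : m - (k + 1) = m - k := by omega
      rw [this]
      exact ih

lemma Bpath_delta (G : WGA) (lmax W : ℕ) (fs : ℕ → WGA.FMap G) (act : ℕ → G.A)
    (hsucc : ∀ i, G.IsSucc lmax W (fs i) (act i) (fs (i + 1)))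
    (m : ℕ) (x0 : G.Q) (hx0 : x0 ∈ G.fsupp (fs m)) :
    ∀ k, k < m → G.Δ (Bpath G fs act m x0 (k + 1)) (act (m - k - 1)) (Bpath G fs act m x0 k) := by
  intro k hk
  have hmem := Bpath_mem G lmax W fs act hsucc m x0 hx0 k
  have hstep : m - k = (m - k - 1) + 1 := by omega
  rw [hstep] at hmem
  obtain ⟨p, hp, hΔ⟩ := pred_exists G lmax W fs act hsucc (m - k - 1) _ hmem
  have hex : ∃ p, p ∈ G.fsupp (fs (m - k - 1)) ∧
      G.Δ p (act (m - k - 1)) (Bpath G fs act m x0 k) ∧ k < m := ⟨p, hp, hΔ, hk⟩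
  rw [Bpath, dif_pos hex]
  exact hex.choose_spec.2.1

/-- The forward round-by-round construction in `G` from time `i` on:
state = (history list, current state, current observation). -/
noncomputable def Rseq (G : WGA) (str : List (Set G.Q × G.A) → Set G.Q → G.A)
    (h0 : List (Set G.Q × G.A)) (q0 : G.Q) (o0 : Set G.Q) :
    ℕ → List (Set G.Q × G.A) × G.Q × Set G.Q
  | 0 => (h0, q0, o0)
  | (k + 1) =>
      let prev := Rseq G str h0 q0 o0 k
      let a := str prev.1 prev.2.2
      let s' := (G.total prev.2.1 a).choose
      (prev.1 ++ [(prev.2.2, a)], s', (G.obs_partition s').exists.choose)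

lemma Rseq_succ (G : WGA) (str : List (Set G.Q × G.A) → Set G.Q → G.A)
    (h0 : List (Set G.Q × G.A)) (q0 : G.Q) (o0 : Set G.Q) (k : ℕ) :
    Rseq G str h0 q0 o0 (k + 1) =
      ((Rseq G str h0 q0 o0 k).1 ++
        [((Rseq G str h0 q0 o0 k).2.2, str (Rseq G str h0 q0 o0 k).1 (Rseq G str h0 q0 o0 k).2.2)],
       (G.total (Rseq G str h0 q0 o0 k).2.1
          (str (Rseq G str h0 q0 o0 k).1 (Rseq G str h0 q0 o0 k).2.2)).choose,
       (G.obs_partition ((G.total (Rseq G str h0 q0 o0 k).2.1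
          (str (Rseq G str h0 q0 o0 k).1 (Rseq G str h0 q0 o0 k).2.2)).choose)).exists.choose) := by
  rw [Rseq]

lemma Rseq_delta (G : WGA) (str : List (Set G.Q × G.A) → Set G.Q → G.A)
    (h0 : List (Set G.Q × G.A)) (q0 : G.Q) (o0 : Set G.Q) (k : ℕ) :
    G.Δ (Rseq G str h0 q0 o0 k).2.1
      (str (Rseq G str h0 q0 o0 k).1 (Rseq G str h0 q0 o0 k).2.2)
      (Rseq G str h0 q0 o0 (k + 1)).2.1 := by
  rw [Rseq_succ]
  exact (G.total _ _).choose_spec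

lemma Rseq_obs (G : WGA) (str : List (Set G.Q × G.A) → Set G.Q → G.A)
    (h0 : List (Set G.Q × G.A)) (q0 : G.Q) (o0 : Set G.Q) (k : ℕ) :
    (Rseq G str h0 q0 o0 (k + 1)).2.2 ∈ G.Obs ∧
      (Rseq G str h0 q0 o0 (k + 1)).2.1 ∈ (Rseq G str h0 q0 o0 (k + 1)).2.2 := by
  rw [Rseq_succ]
  exact ⟨(G.obs_partition _).exists.choose_spec.1, (G.obs_partition _).exists.choose_spec.2⟩

lemma hist_succ (G : WGA) (obs : ℕ → Set G.Q) (act : ℕ → G.A) (n : ℕ) :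
    G.hist obs act (n + 1) = G.hist obs act n ++ [(obs n, act n)] := by
  simp [WGA.hist, List.range_succ]

lemma hist_congr (G : WGA) (obs obs' : ℕ → Set G.Q) (act act' : ℕ → G.A) (n : ℕ)
    (h : ∀ t, t < n → obs t = obs' t ∧ act t = act' t) :
    G.hist obs act n = G.hist obs' act' n := by
  unfold WGA.hist
  apply List.map_congr_left
  intro t ht
  rw [List.mem_range] at ht
  rw [(h t ht).1, (h t ht).2]

end Aux1
/-- Lemma 6: if Eve wins `DirFix(0,lmax)` in `G`, then the strategy
`λ'(ρ') = λ(obs(supp(ρ')))` is winning for her in the safety game `G'`. -/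
theorem dirfix_completeness (G : WGA) (lmax W : ℕ) (hlmax : 1 ≤ lmax)
    (hW : ∀ p σ q, G.Δ p σ q → |G.w p σ q| ≤ (W : ℤ))
    (hqI : ({G.qI} : Set G.Q) ∈ G.Obs)
    (str : List (Set G.Q × G.A) → Set G.Q → G.A)
    (hwin : ∀ obs act, G.IsPlay obs act → G.Consistent str obs act →
      G.DirFix 0 lmax obs act)
    (strP : List (WGA.FMap G × G.A) → WGA.FMap G → G.A)
    (hrel : ∀ (fs : ℕ → WGA.FMap G) (act : ℕ → G.A) (n : ℕ) (obs : ℕ → Set G.Q),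
      fs 0 = G.fI →
      (∀ i, i < n → G.IsSucc lmax W (fs i) (act i) (fs (i + 1))) →
      (∀ i, i ≤ n → obs i ∈ G.Obs ∧ G.fsupp (fs i) ⊆ obs i) →
      strP (G.histP fs act n) (fs n) = str (G.hist obs act n) (obs n)) :
    G.WinsSafeP lmax W strP := by
  classical
  intro fs act h0 hsucc hcons i hFU
  obtain ⟨-, q, hq, hneg⟩ := hFU
  obtain ⟨m, phat, him, hpj, hsupp, hΔc, hsums, -⟩ :=
    Aux1.lemB G lmax W hlmax hW fs act h0 hsucc lmax hlmax le_rfl i q hq hneg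
  -- the concrete path in the arena: backward part + the bad segment
  set base : ℕ → G.Q :=
    fun t => if t < m then Aux1.Bpath G fs act m (phat 0) (m - t) else phat (t - m) with hbase
  have hphat0 : phat 0 ∈ G.fsupp (fs m) := by simpa using hsupp 0 (by omega)
  have hbase_at : ∀ k, base (m + k) = phat k := by
    intro k
    rw [hbase]
    simp only [if_neg (show ¬ m + k < m by omega)]
    congr 1
    omega
  have hbase_i : base i = q := by
    rw [him, hbase_at lmax, hpj]
  have hbase_mem : ∀ t, t ≤ i → base t ∈ G.fsupp (fs t) := by
    intro t ht
    rw [hbase]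
    by_cases htm : t < m
    · simp only [if_pos htm]
      have hmem := Aux1.Bpath_mem G lmax W fs act hsucc m (phat 0) hphat0 (m - t)
      have he : m - (m - t) = t := by omega
      rw [he] at hmem
      exact hmem
    · simp only [if_neg htm]
      have he : m + (t - m) = t := by omega
      have h2 := hsupp (t - m) (by omega)
      rw [he] at h2
      exact h2
  have hbase_delta : ∀ t, t < i → G.Δ (base t) (act t) (base (t + 1)) := by
    intro t ht
    by_cases htm : t + 1 ≤ m
    · have hd := Aux1.Bpath_delta G lmax W fs act hsucc m (phat 0) hphat0 (m - t - 1) (by omega)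
      have e1 : m - t - 1 + 1 = m - t := by omega
      have e2 : m - (m - t - 1) - 1 = t := by omega
      rw [e1, e2] at hd
      rw [hbase]
      by_cases ht1 : t + 1 < m
      · simp only [if_pos (show t < m by omega), if_pos ht1]
        have e3 : m - (t + 1) = m - t - 1 := by omega
        rw [e3]
        exact hd
      · simp only [if_pos (show t < m by omega), if_neg ht1]
        have e4 : t + 1 - m = 0 := by omega
        rw [e4]
        have e5 : m - t - 1 = 0 := by omega
        rw [e5] at hd
        simpa [Aux1.Bpath] using hd
    · have hd := hΔc (t - m) (by omega)
      have e1 : m + (t - m) = t := by omega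
      rw [e1] at hd
      rw [hbase]
      simp only [if_neg (show ¬ t < m by omega), if_neg (show ¬ t + 1 < m by omega)]
      have e2 : t + 1 - m = (t - m) + 1 := by omega
      rw [e2]
      exact hd
  -- the play in G' projected to G, extended forward following the strategy
  set R : ℕ → List (Set G.Q × G.A) × G.Q × Set G.Q :=
    Aux1.Rseq G str (G.hist (Aux1.oA G fs act) act i) q (Aux1.oA G fs act i) with hR
  have hR0 : R 0 = (G.hist (Aux1.oA G fs act) act i, q, Aux1.oA G fs act i) := by
    rw [hR, Aux1.Rseq]
  set OBS : ℕ → Set G.Q :=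
    fun t => if t ≤ i then Aux1.oA G fs act t else (R (t - i)).2.2 with hOBS
  set ACT : ℕ → G.A :=
    fun t => if t < i then act t else str (R (t - i)).1 (R (t - i)).2.2 with hACT
  set PI : ℕ → G.Q :=
    fun t => if t ≤ i then base t else (R (t - i)).2.1 with hPI
  have hOBS_le : ∀ t, t ≤ i → OBS t = Aux1.oA G fs act t := by
    intro t ht; rw [hOBS]; simp only [if_pos ht]
  have hOBS_gt : ∀ t, i < t → OBS t = (R (t - i)).2.2 := by
    intro t ht; rw [hOBS]; simp only [if_neg (show ¬ t ≤ i by omega)]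
  have hACT_lt : ∀ t, t < i → ACT t = act t := by
    intro t ht; rw [hACT]; simp only [if_pos ht]
  have hACT_ge : ∀ t, i ≤ t → ACT t = str (R (t - i)).1 (R (t - i)).2.2 := by
    intro t ht; rw [hACT]; simp only [if_neg (show ¬ t < i by omega)]
  have hPI_le : ∀ t, t ≤ i → PI t = base t := by
    intro t ht; rw [hPI]; simp only [if_pos ht]
  have hPI_gt : ∀ t, i < t → PI t = (R (t - i)).2.1 := by
    intro t ht; rw [hPI]; simp only [if_neg (show ¬ t ≤ i by omega)]
  -- the key correspondence
  have hRkey : ∀ k, (R k).1 = G.hist OBS ACT (i + k) ∧ (R k).2.2 = OBS (i + k) ∧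
      (R k).2.1 = PI (i + k) := by
    intro k
    induction k with
    | zero =>
      refine ⟨?_, ?_, ?_⟩
      · rw [hR0]
        exact Aux1.hist_congr G _ OBS _ ACT i
          (fun t ht => ⟨(hOBS_le t (by omega)).symm, (hACT_lt t ht).symm⟩)
      · rw [Nat.add_zero, hR0, hOBS_le i le_rfl]
      · rw [Nat.add_zero, hR0, hPI_le i le_rfl]
        exact hbase_i.symm
    | succ k ih =>
      obtain ⟨ih1, ih2, ih3⟩ := ih
      have hstep := Aux1.Rseq_succ G str (G.hist (Aux1.oA G fs act) act i) q
        (Aux1.oA G fs act i) k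
      rw [← hR] at hstep
      have e2 : i + k - i = k := by omega
      refine ⟨?_, ?_, ?_⟩
      · have e : i + (k + 1) = (i + k) + 1 := rfl
        rw [e, Aux1.hist_succ, hACT_ge (i + k) (by omega), e2, ← ih1, ← ih2, hstep]
      · rw [hOBS_gt (i + (k + 1)) (by omega)]
        have e3 : i + (k + 1) - i = k + 1 := by omega
        rw [e3]
      · rw [hPI_gt (i + (k + 1)) (by omega)]
        have e3 : i + (k + 1) - i = k + 1 := by omega
        rw [e3]
  -- PI is a concretization of (OBS, ACT)
  have hconc : G.Concretizes OBS ACT PI := by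
    constructor
    · intro t
      by_cases ht : t ≤ i
      · rw [hOBS_le t ht, hPI_le t ht]
        exact Aux1.oA_supp G lmax W fs act h0 hsucc t (hbase_mem t ht)
      · push_neg at ht
        rw [hOBS_gt t ht, hPI_gt t ht]
        have e : t - i = (t - i - 1) + 1 := by omega
        rw [e, hR]
        exact (Aux1.Rseq_obs G str _ _ _ (t - i - 1)).2
    · intro t
      by_cases ht : t + 1 ≤ i
      · rw [hPI_le t (by omega), hPI_le (t + 1) ht, hACT_lt t (by omega)]
        exact hbase_delta t (by omega)
      · push_neg at ht
        have hti : i ≤ t := by omega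
        have e1 : t + 1 - i = (t - i) + 1 := by omega
        rw [hACT_ge t hti, hPI_gt (t + 1) (by omega), e1]
        have hPIt : PI t = (R (t - i)).2.1 := by
          by_cases hti' : t ≤ i
          · have hti2 : t = i := by omega
            rw [hPI_le t hti', hti2, hbase_i]
            have e0 : i - i = 0 := by omega
            rw [e0, hR0]
          · rw [hPI_gt t (by omega)]
        rw [hPIt, hR]
        exact Aux1.Rseq_delta G str _ _ _ (t - i)
  -- (OBS, ACT) is a play
  have hplay : G.IsPlay OBS ACT := by
    refine ⟨?_, ?_, ⟨PI, hconc⟩⟩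
    · intro t
      by_cases ht : t ≤ i
      · rw [hOBS_le t ht]
        exact Aux1.oA_obs G fs act hqI t
      · push_neg at ht
        rw [hOBS_gt t ht]
        have e : t - i = (t - i - 1) + 1 := by omega
        rw [e, hR]
        exact (Aux1.Rseq_obs G str _ _ _ (t - i - 1)).1
    · rw [hOBS_le 0 (by omega)]
      show G.qI ∈ Aux1.oA G fs act 0
      rw [Aux1.oA]
      exact rfl
  -- the play is consistent with the strategy str
  have hcons' : G.Consistent str OBS ACT := by
    intro t
    by_cases ht : t < i
    · rw [hACT_lt t ht]
      have hrp := hrel fs act t (Aux1.oA G fs act) h0 (fun t' _ => hsucc t')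
        (fun t' _ => ⟨Aux1.oA_obs G fs act hqI t', Aux1.oA_supp G lmax W fs act h0 hsucc t'⟩)
      rw [hOBS_le t (by omega),
        Aux1.hist_congr G OBS (Aux1.oA G fs act) ACT act t
          (fun t' ht' => ⟨hOBS_le t' (by omega), hACT_lt t' (by omega)⟩)]
      rw [hcons t]
      exact hrp
    · push_neg at ht
      rw [hACT_ge t ht, (hRkey (t - i)).1, (hRkey (t - i)).2.1]
      have e : i + (t - i) = t := by omega
      rw [e]
  -- derive the contradiction from the good-window property at position m
  have hdf := hwin OBS ACT hplay hcons'
  obtain ⟨j, hj1, hjlm, hge⟩ := hdf PI hconc m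
  have hsum_eq : G.winSum PI ACT m j =
      ∑ k ∈ Finset.range j, G.w (phat k) (act (m + k)) (phat (k + 1)) := by
    unfold WGA.winSum
    refine Finset.sum_congr rfl fun k hk => ?_
    rw [Finset.mem_range] at hk
    have h1 : PI (m + k) = phat k := by
      rw [hPI_le (m + k) (by omega), hbase_at k]
    have h2 : PI (m + k + 1) = phat (k + 1) := by
      have e : m + k + 1 = m + (k + 1) := by omega
      rw [e, hPI_le (m + (k + 1)) (by omega), hbase_at (k + 1)]
    have h3 : ACT (m + k) = act (m + k) := hACT_lt (m + k) (by omega)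
    rw [h1, h2, h3]
  have hneg2 := hsums j hj1 hjlm
  rw [hsum_eq] at hge
  have hjq : (0 : ℚ) < (j : ℚ) := by exact_mod_cast hj1
  have hsq : ((∑ k ∈ Finset.range j, G.w (phat k) (act (m + k)) (phat (k + 1)) : ℤ) : ℚ) < 0 := by
    exact_mod_cast hneg2
  have hdiv := div_neg_of_neg_of_pos hsq hjq
  linarith
end

section
/- Let G be a WGA, lmax ≥ 1, and let Δ' be the σ-successor transition relation on 𝓕, with upre(S) = {p' ∈ 𝓕 : ∀σ ∈ Σ, ∃q' ∈ S, (p',σ,q') ∈ Δ'}. Let S ⊆ 𝓕 be upward-closed and let f, g ∈ 𝓕 ∖ 𝒰. If f ∈ upre(S) and f ⪯ g, then g ∈ upre(S). -/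
open scoped Classical

section Aux

variable (G : WGA)

lemma zetaSet_finite (f1 : WGA.FMap G) (σ : G.A) (q : G.Q) (j : ℕ) :
    (G.zetaSet f1 σ q j).Finite := by
  classical
  apply Set.Finite.subset (Set.finite_range
    (fun p : G.Q => if j = 1 then G.w p σ q else G.fval f1 p (j - 1) + G.w p σ q))
  intro x hx
  unfold WGA.zetaSet at hx
  by_cases hj : j = 1
  · rw [if_pos hj] at hx
    obtain ⟨p, _, _, rfl⟩ := hx
    exact ⟨p, by simp [hj]⟩
  · rw [if_neg hj] at hx
    obtain ⟨p, _, _, _, rfl⟩ := hx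
    exact ⟨p, by simp [hj]⟩

lemma isLeast_sInf_of_finite {Z : Set ℤ} (hfin : Z.Finite) (hne : Z.Nonempty) :
    IsLeast Z (sInf Z) :=
  ⟨hne.csInf_mem hfin, fun _ hx => csInf_le hfin.bddBelow hx⟩

/-- The canonical σ-successor of `g` with observation `o`. -/
noncomputable def succOf (lmax W : ℕ) (g : WGA.FMap G) (σ : G.A) (o : Set G.Q) :
    WGA.FMap G :=
  fun q => if q ∈ G.postSet σ (G.fsupp g) ∩ o then
    some (fun j => if 1 ≤ j ∧ j ≤ lmax then
      (if (G.zetaSet g σ q j).Nonempty then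
        max (-((W : ℤ) * (lmax : ℤ))) (min 0 (sInf (G.zetaSet g σ q j)))
      else max (-((W : ℤ) * (lmax : ℤ))) 0)
    else 0) else none

lemma succOf_supp (lmax W : ℕ) (g : WGA.FMap G) (σ : G.A) (o : Set G.Q) :
    G.fsupp (succOf G lmax W g σ o) = G.postSet σ (G.fsupp g) ∩ o := by
  ext q
  simp only [WGA.fsupp, Set.mem_setOf_eq, succOf]
  by_cases h : q ∈ G.postSet σ {q | g q ≠ none} ∩ o <;> simp_all

lemma succOf_fval (lmax W : ℕ) (g : WGA.FMap G) (σ : G.A) (o : Set G.Q)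
    (q : G.Q) (hq : q ∈ G.postSet σ (G.fsupp g) ∩ o) (j : ℕ) (h1 : 1 ≤ j) (h2 : j ≤ lmax) :
    G.fval (succOf G lmax W g σ o) q j =
      (if (G.zetaSet g σ q j).Nonempty then
        max (-((W : ℤ) * (lmax : ℤ))) (min 0 (sInf (G.zetaSet g σ q j)))
      else max (-((W : ℤ) * (lmax : ℤ))) 0) := by
  simp [WGA.fval, succOf, hq.1, hq.2, h1, h2]

lemma succOf_valid (lmax W : ℕ) (g : WGA.FMap G) (σ : G.A) (o : Set G.Q) :
    G.ValidF lmax W (succOf G lmax W g σ o) := by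
  intro q h heq
  have hnegB : -((W : ℤ) * (lmax : ℤ)) ≤ 0 := neg_nonpos.mpr (by positivity)
  unfold succOf at heq
  split at heq
  · injection heq with heq
    subst heq
    constructor
    · intro i hi1 hi2
      simp only [if_pos (And.intro hi1 hi2)]
      split
      · exact ⟨le_max_left _ _, max_le hnegB (min_le_left _ _)⟩
      · exact ⟨le_max_left _ _, max_le hnegB le_rfl⟩
    · intro i hi
      have : ¬(1 ≤ i ∧ i ≤ lmax) := by omega
      simp [this]
  · exact absurd heq (by simp)

end Aux

/-- Lemma 8: outside of 𝒰, the `upre` operator preserves upward-closedness: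
if `S` is upward-closed, `f, g ∈ 𝓕 ∖ 𝒰`, `f ∈ upre(S)` and `f ⪯ g`, then `g ∈ upre(S)`. -/
theorem upre_is_uc (G : WGA) (lmax W : ℕ) (hlmax : 1 ≤ lmax)
    (hW : ∀ p σ q, G.Δ p σ q → |G.w p σ q| ≤ (W : ℤ))
    (S : Set (WGA.FMap G)) (hS : S ⊆ G.Fset lmax W) (hUC : G.UpClosed lmax W S)
    (f g : WGA.FMap G)
    (hf : f ∈ G.Fset lmax W) (hg : g ∈ G.Fset lmax W)
    (hfU : f ∉ G.FU lmax W) (hgU : g ∉ G.FU lmax W)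
    (hup : f ∈ G.upreF lmax W S) (hpre : G.Preceq lmax f g) :
    g ∈ G.upreF lmax W S := by
  
  classical
  have hnegB : -((W : ℤ) * (lmax : ℤ)) ≤ 0 := neg_nonpos.mpr (by positivity)
  refine ⟨hg, fun σ => ?_⟩
  obtain ⟨f2, hf2S, hf2valid, ⟨o, ho, hsuppf2⟩, hval⟩ := hup.2 σ
  set g2 : WGA.FMap G := succOf G lmax W g σ o with hg2def
  have hsupp2 : G.fsupp g2 = G.postSet σ (G.fsupp g) ∩ o := succOf_supp G lmax W g σ o
  have hvalid2 : G.ValidF lmax W g2 := succOf_valid G lmax W g σ o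
  have hpostmono : G.postSet σ (G.fsupp f) ⊆ G.postSet σ (G.fsupp g) := by
    rintro q ⟨p, hp, hΔ⟩; exact ⟨p, hpre.1 hp, hΔ⟩
  -- g2 is a σ-successor of g
  have hsucc2 : G.IsSucc lmax W g σ g2 := by
    refine ⟨hvalid2, ⟨o, ho, hsupp2⟩, fun q hq j h1 h2 => ?_⟩
    rw [hsupp2] at hq
    rw [succOf_fval G lmax W g σ o q hq j h1 h2]
    by_cases hne : (G.zetaSet g σ q j).Nonempty
    · exact Or.inr ⟨sInf _, isLeast_sInf_of_finite (zetaSet_finite G g σ q j) hne,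
        by rw [if_pos hne]⟩
    · exact Or.inl ⟨Set.not_nonempty_iff_eq_empty.mp hne, by rw [if_neg hne]⟩
  -- f2 ⪯ g2
  have hpre2 : G.Preceq lmax f2 g2 := by
    constructor
    · rw [hsuppf2, hsupp2]
      exact Set.inter_subset_inter_left o hpostmono
    · intro q hq i h1 h2
      have hqf : q ∈ G.postSet σ (G.fsupp f) ∩ o := by rwa [hsuppf2] at hq
      have hqg : q ∈ G.postSet σ (G.fsupp g) ∩ o := ⟨hpostmono hqf.1, hqf.2⟩
      rcases hval q hq i h1 h2 with ⟨_, hv⟩ | ⟨z, hz, hv⟩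
      · -- empty case: f2(q)_i = max(-Wl, 0), and g2 value is always ≤ that
        refine ⟨i, le_rfl, h2, ?_⟩
        rw [succOf_fval G lmax W g σ o q hqg i h1 h2, hv]
        split
        · exact max_le_max le_rfl (min_le_left _ _)
        · exact le_rfl
      · -- nonempty case with least z
        have hzmem := hz.1
        by_cases hi1 : i = 1
        · subst hi1
          unfold WGA.zetaSet at hzmem
          rw [if_pos rfl] at hzmem
          obtain ⟨p, hp, hΔ, rfl⟩ := hzmem
          have hmem : G.w p σ q ∈ G.zetaSet g σ q 1 := by
            unfold WGA.zetaSet; rw [if_pos rfl]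
            exact ⟨p, hpre.1 hp, hΔ, rfl⟩
          have hne : (G.zetaSet g σ q 1).Nonempty := ⟨_, hmem⟩
          have hle : sInf (G.zetaSet g σ q 1) ≤ G.w p σ q :=
            csInf_le (zetaSet_finite G g σ q 1).bddBelow hmem
          refine ⟨1, le_rfl, hlmax, ?_⟩
          rw [succOf_fval G lmax W g σ o q hqg 1 le_rfl hlmax, if_pos hne, hv]
          exact max_le_max le_rfl (min_le_min le_rfl hle)
        · -- i ≥ 2
          have hi2 : 2 ≤ i := by omega
          unfold WGA.zetaSet at hzmem
          rw [if_neg hi1] at hzmem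
          obtain ⟨p, hp, hΔ, hneg, rfl⟩ := hzmem
          obtain ⟨j', hj1, hj2, hle⟩ := hpre.2 p hp (i - 1) (by omega) (by omega)
          have hgneg : G.fval g p j' < 0 := lt_of_le_of_lt hle hneg
          have hj'lt : j' < lmax := by
            rcases lt_or_eq_of_le hj2 with h | h
            · exact h
            · exact absurd ⟨hg, p, hpre.1 hp, h ▸ hgneg⟩ hgU
          have hmem : G.fval g p j' + G.w p σ q ∈ G.zetaSet g σ q (j' + 1) := by
            unfold WGA.zetaSet
            rw [if_neg (by omega : ¬ j' + 1 = 1)]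
            exact ⟨p, hpre.1 hp, hΔ, by simpa using hgneg, by simp⟩
          have hne : (G.zetaSet g σ q (j' + 1)).Nonempty := ⟨_, hmem⟩
          have hle2 : sInf (G.zetaSet g σ q (j' + 1)) ≤ G.fval f p (i - 1) + G.w p σ q :=
            le_trans (csInf_le (zetaSet_finite G g σ q (j' + 1)).bddBelow hmem)
              (by linarith)
          refine ⟨j' + 1, by omega, by omega, ?_⟩
          rw [succOf_fval G lmax W g σ o q hqg (j' + 1) (by omega) (by omega),
            if_pos hne, hv]
          exact max_le_max le_rfl (min_le_min le_rfl hle2)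
  exact ⟨g2, hUC f2 hf2S g2 hvalid2 hpre2, hsucc2⟩
end

section
/- Consider the perfect-information WGA G with states Q = {q_0, q_1}, initial state q_0, a single action a, observations {q_0} and {q_1}, and transitions (q_0,a,q_1) of weight −1, (q_1,a,q_0) of weight +1, and (q_1,a,q_1) of weight 0, and take lmax = 2 (so W = 1 and values range over {−2,…,0}). Then the set upre(𝒰) ⊆ 𝓕 is NOT upward-closed with respect to the partial order ⪯: there exist f, g ∈ 𝓕 with f ⪯ g, f ∈ upre(𝒰) and g ∉ upre(𝒰). -/
open scoped Classical

/-- The perfect-information WGA of Figure 4: states `q₀ = false`, `q₁ = true`, a single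
action, transitions `q₀ →(−1) q₁`, `q₁ →(+1) q₀`, `q₁ →0 q₁`, singleton observations. -/
def G3 : WGA where
  Q := Bool
  fintypeQ := inferInstance
  qI := false
  A := Unit
  fintypeA := inferInstance
  nonemptyA := inferInstance
  Δ := fun q _ q' => ¬(q = false ∧ q' = false)
  total := fun _ _ => ⟨true, by simp⟩
  w := fun q _ q' => if q = false then (-1 : ℤ) else if q' = false then 1 else 0
  Obs := {{false}, {true}}
  obs_empty := by
    intro h
    simp only [Set.mem_insert_iff, Set.mem_singleton_iff] at h
    rcases h with h | h
    · exact Set.singleton_ne_empty false h.symm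
    · exact Set.singleton_ne_empty true h.symm
  obs_partition := by
    intro q
    cases q
    · refine ⟨{false}, ⟨Or.inl rfl, rfl⟩, ?_⟩
      rintro o ⟨ho, hq⟩
      simp only [Set.mem_insert_iff, Set.mem_singleton_iff] at ho
      rcases ho with rfl | rfl
      · rfl
      · simp only [Set.mem_singleton_iff] at hq
        exact absurd hq (by decide)
    · refine ⟨{true}, ⟨Or.inr rfl, rfl⟩, ?_⟩
      rintro o ⟨ho, hq⟩
      simp only [Set.mem_insert_iff, Set.mem_singleton_iff] at ho
      rcases ho with rfl | rfl
      · simp only [Set.mem_singleton_iff] at hq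
        exact absurd hq (by decide)
      · rfl

namespace Ex16
open WGA

def fv : ℕ → ℤ := fun i => if i = 1 ∨ i = 2 then -1 else 0
def gv : ℕ → ℤ := fun i => if i = 2 then -1 else 0

def ff : WGA.FMap G3 := fun q => cond q (some fv) none
def gg : WGA.FMap G3 := fun q => cond q (some gv) none

lemma supp_ff : ∀ q : G3.Q, q ∈ G3.fsupp ff ↔ q = true := by
  intro q
  cases q
  · exact ⟨fun h => absurd h (fun h' => h' rfl), fun h => Bool.noConfusion h⟩
  · exact ⟨fun _ => rfl, fun _ h => Option.some_ne_none _ h⟩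

lemma supp_gg : ∀ q : G3.Q, q ∈ G3.fsupp gg ↔ q = true := by
  intro q
  cases q
  · exact ⟨fun h => absurd h (fun h' => h' rfl), fun h => Bool.noConfusion h⟩
  · exact ⟨fun _ => rfl, fun _ h => Option.some_ne_none _ h⟩

lemma fval_ff : ∀ i, G3.fval ff true i = fv i := fun _ => rfl
lemma fval_gg : ∀ i, G3.fval gg true i = gv i := fun _ => rfl

lemma valid_ff : G3.ValidF 2 1 ff := by
  intro q h hq
  cases q with
  | false => simp [ff] at hq
  | true =>
    simp only [ff, cond_true, Option.some.injEq] at hq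
    subst hq
    constructor
    · intro i h1 h2
      interval_cases i <;> simp [fv]
    · intro i hi
      have : ¬ (i = 1 ∨ i = 2) := by omega
      simp [fv, this]

lemma valid_gg : G3.ValidF 2 1 gg := by
  intro q h hq
  cases q with
  | false => simp [gg] at hq
  | true =>
    simp only [gg, cond_true, Option.some.injEq] at hq
    subst hq
    constructor
    · intro i h1 h2
      interval_cases i <;> simp [gv]
    · intro i hi
      have : i ≠ 2 := by omega
      simp [gv, this]

lemma gg_in_FU : gg ∈ G3.FU 2 1 := by
  refine ⟨valid_gg, true, (supp_gg true).2 rfl, ?_⟩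
  simp [fval_gg, gv]

lemma isSucc_ff_gg : G3.IsSucc 2 1 ff () gg := by
  refine ⟨valid_gg, ⟨{true}, Or.inr rfl, ?_⟩, ?_⟩
  · ext q
    simp only [Set.mem_inter_iff, Set.mem_setOf_eq, Set.mem_singleton_iff]
    constructor
    · intro h
      have := (supp_gg q).1 h
      refine ⟨⟨true, (supp_ff true).2 rfl, ?_⟩, this⟩
      simp [G3, this]
    · rintro ⟨_, rfl⟩
      exact (supp_gg true).2 rfl
  · intro q hq j h1 h2
    have hqt := (supp_gg q).1 hq
    subst hqt
    interval_cases j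
    · -- j = 1
      refine Or.inr ⟨0, ⟨?_, ?_⟩, ?_⟩
      · -- 0 ∈ zetaSet
        simp only [WGA.zetaSet, if_pos rfl]
        exact ⟨true, (supp_ff true).2 rfl, by simp [G3], by simp [G3]⟩
      · intro x hx
        simp only [WGA.zetaSet, if_pos rfl, Set.mem_setOf_eq] at hx
        obtain ⟨p, hp, _, hxw⟩ := hx
        have := (supp_ff p).1 hp
        subst this
        simp [G3] at hxw
        omega
      · simp [fval_gg, gv]
    · -- j = 2
      refine Or.inr ⟨-1, ⟨?_, ?_⟩, ?_⟩
      · simp only [WGA.zetaSet, if_neg (by norm_num : (2:ℕ) ≠ 1)]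
        refine ⟨true, (supp_ff true).2 rfl, by simp [G3], by decide, by decide⟩
      · intro x hx
        simp only [WGA.zetaSet, if_neg (by norm_num : (2:ℕ) ≠ 1), Set.mem_setOf_eq] at hx
        obtain ⟨p, hp, _, _, hxw⟩ := hx
        have := (supp_ff p).1 hp
        subst this
        have h1 : G3.fval ff true (2 - 1) = -1 := rfl
        have h2 : G3.w true () true = 0 := rfl
        rw [h1, h2] at hxw
        omega
      · simp [fval_gg, gv]

lemma preceq_ff_gg : G3.Preceq 2 ff gg := by
  constructor
  · intro q hq
    exact (supp_gg q).2 ((supp_ff q).1 hq)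
  · intro q hq i h1 h2
    have := (supp_ff q).1 hq
    subst this
    refine ⟨2, by omega, le_refl 2, ?_⟩
    simp only [fval_ff, fval_gg, gv, fv]
    interval_cases i <;> simp

lemma ff_in_upre : ff ∈ G3.upreF 2 1 (G3.FU 2 1) := by
  refine ⟨valid_ff, fun σ => ⟨gg, gg_in_FU, ?_⟩⟩
  cases σ
  exact isSucc_ff_gg

lemma gg_not_in_upre : gg ∉ G3.upreF 2 1 (G3.FU 2 1) := by
  rintro ⟨_, hall⟩
  obtain ⟨f2, ⟨_, q, hq, hneg⟩, _, _, hsv⟩ := hall ()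
  have h2 := hsv q hq 2 (by norm_num) (le_refl 2)
  have hempty : G3.zetaSet gg () q 2 = ∅ := by
    ext x
    simp only [WGA.zetaSet, if_neg (by norm_num : (2:ℕ) ≠ 1), Set.mem_setOf_eq,
      Set.mem_empty_iff_false, iff_false]
    rintro ⟨p, hp, _, hlt, _⟩
    have := (supp_gg p).1 hp
    subst this
    simp [fval_gg, gv] at hlt
  rcases h2 with ⟨_, hv⟩ | ⟨z, ⟨hz, _⟩, _⟩
  · rw [hv] at hneg
    norm_num at hneg
  · rw [hempty] at hz
    exact hz

end Ex16

/-- Example 1: in the arena `G3` with `lmax = 2` and `W = 1`, the set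
`upre(𝒰)` is not upward-closed: some `f ⪯ g` with `f ∈ upre(𝒰)` but `g ∉ upre(𝒰)`. -/
theorem upre_not_upward_closed :
    ∃ f g : WGA.FMap G3,
      G3.ValidF 2 1 f ∧ G3.ValidF 2 1 g ∧ G3.Preceq 2 f g ∧
      f ∈ G3.upreF 2 1 (G3.FU 2 1) ∧ g ∉ G3.upreF 2 1 (G3.FU 2 1) := by
  exact
  ⟨Ex16.ff, Ex16.gg, Ex16.valid_ff, Ex16.valid_gg, Ex16.preceq_ff_gg,
    Ex16.ff_in_upre, Ex16.gg_not_in_upre⟩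
end

section
/- Let G be a WGA with {q_I} ∈ Obs and lmax ≥ 1, and let 𝒩 be the nondeterministic Büchi automaton defined from G and lmax as in the context. Then for every play ψ = o_0σ_0o_1σ_1… of G (with o_0 = {q_I}), viewed as the infinite word (σ_0,o_1)(σ_1,o_2)… over Σ × Obs, 𝒩 accepts this word if and only if ψ ∉ Fix(0,lmax). -/
open scoped Classical

namespace WGA

/-- States of the nondeterministic Büchi automaton 𝒩: a state of `G`, the length of the
currently tracked window (in `{1,…,lmax}`), and its (negative) running weight or `⊥`. -/
def NState (G : WGA) := G.Q × ℕ × Option ℤ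

/-- The initial state `(q_I, 1, ⊥)` of 𝒩. -/
def NInit (G : WGA) : NState G := (G.qI, 1, none)

/-- The transition relation Δ'' of 𝒩: on letter `(σ,o)`, move from `(p,i,n)` to `(q,j,m)`
with `(p,σ,q) ∈ Δ`, `q ∈ o`, where `m = w(p,σ,q)` if `w(p,σ,q) < 0`;
`m = n + w(p,σ,q)` if `n ≠ ⊥`, `n + w(p,σ,q) < 0` and `i < lmax`; and `m = ⊥` otherwise;
and `j = i + 1` if `m = n + w(p,σ,q)`, `j = 1` otherwise. -/
def NTrans (G : WGA) (lmax : ℕ) (s : NState G) (x : G.A × Set G.Q) (t : NState G) : Prop :=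
  G.Δ s.1 x.1 t.1 ∧ t.1 ∈ x.2 ∧
  ((G.w s.1 x.1 t.1 < 0 ∧ t.2.2 = some (G.w s.1 x.1 t.1) ∧ t.2.1 = 1) ∨
   (∃ nv : ℤ, s.2.2 = some nv ∧ nv + G.w s.1 x.1 t.1 < 0 ∧ s.2.1 < lmax ∧
      t.2.2 = some (nv + G.w s.1 x.1 t.1) ∧ t.2.1 = s.2.1 + 1) ∨
   (¬ G.w s.1 x.1 t.1 < 0 ∧
    (∀ nv : ℤ, s.2.2 = some nv → ¬ (nv + G.w s.1 x.1 t.1 < 0 ∧ s.2.1 < lmax)) ∧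
    t.2.2 = none ∧ t.2.1 = 1))

/-- Büchi acceptance for 𝒩: some run visits accepting states `(q, lmax, n ≠ ⊥)`
infinitely often. -/
def NAccepts (G : WGA) (lmax : ℕ) (x : ℕ → G.A × Set G.Q) : Prop :=
  ∃ r : ℕ → NState G, r 0 = NInit G ∧
    (∀ i, NTrans G lmax (r i) (x i) (r (i + 1))) ∧
    ∀ N, ∃ k, N ≤ k ∧ (r k).2.1 = lmax ∧ (r k).2.2 ≠ none

end WGA

namespace AuxNBA

open WGA

lemma winSum_one (G : WGA) (π : ℕ → G.Q) (act : ℕ → G.A) (s : ℕ) :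
    G.winSum π act s 1 = G.w (π s) (act s) (π (s + 1)) := by
  simp [WGA.winSum]

lemma winSum_succ (G : WGA) (π : ℕ → G.Q) (act : ℕ → G.A) (s j : ℕ) :
    G.winSum π act s (j + 1) =
      G.winSum π act s j + G.w (π (s + j)) (act (s + j)) (π (s + j + 1)) := by
  simp [WGA.winSum, Finset.sum_range_succ]

lemma not_GW_iff (G : WGA) (lmax p : ℕ) (π : ℕ → G.Q) (act : ℕ → G.A) :
    ¬ G.GW 0 p lmax π act ↔ ∀ j, 1 ≤ j → j ≤ lmax → G.winSum π act p j < 0 := by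
  simp only [WGA.GW, not_exists, not_and]
  constructor
  · intro h j h1 h2
    by_contra hc
    push_neg at hc
    exact h j h1 h2 (div_nonneg (by exact_mod_cast hc) (by positivity))
  · intro h j h1 h2 hle
    have hs := h j h1 h2
    have hj : (0:ℚ) < (j:ℚ) := by exact_mod_cast Nat.pos_of_ne_zero (by omega)
    have hs' : (G.winSum π act p j : ℚ) < 0 := by exact_mod_cast hs
    have := div_neg_of_neg_of_pos hs' hj
    linarith

/-- Invariant of any run of 𝒩: a state `(q, i, some nv)` at time `k` means the window
of length `i` ending at time `k` has all its prefix sums negative, with total `nv`. -/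
lemma run_inv (G : WGA) (lmax : ℕ) (r : ℕ → NState G) (act : ℕ → G.A)
    (obs : ℕ → Set G.Q) (hr0 : r 0 = NInit G)
    (htr : ∀ i, NTrans G lmax (r i) (act i, obs (i + 1)) (r (i + 1))) :
    ∀ k nv, (r k).2.2 = some nv →
      (r k).2.1 ≤ k ∧ 1 ≤ (r k).2.1 ∧
      nv = G.winSum (fun i => (r i).1) act (k - (r k).2.1) (r k).2.1 ∧
      ∀ j, 1 ≤ j → j ≤ (r k).2.1 →
        G.winSum (fun i => (r i).1) act (k - (r k).2.1) j < 0 := by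
  set π : ℕ → G.Q := fun i => (r i).1 with hπ
  intro k
  induction k with
  | zero =>
    intro nv h
    rw [hr0] at h
    simp [NInit] at h
  | succ k ih =>
    obtain ⟨hΔ, hmem, hcase⟩ := htr k
    have hw1 : G.winSum π act k 1 = G.w (r k).1 (act k) (r (k + 1)).1 :=
      winSum_one G π act k
    rcases hcase with ⟨hwneg, ht2, ht1⟩ | ⟨nv0, hsome, hlt, hilt, ht2, ht1⟩ |
      ⟨_, _, ht2, _⟩
    · intro nv h
      rw [ht2] at h
      have hnv : nv = G.w (r k).1 (act k) (r (k + 1)).1 := (Option.some.inj h).symm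
      rw [ht1]
      refine ⟨by omega, le_refl _, ?_, ?_⟩
      · rw [Nat.add_sub_cancel, hw1, hnv]
      · intro j h1 h2
        have : j = 1 := by omega
        subst this
        rw [Nat.add_sub_cancel, hw1]
        exact hwneg
    · obtain ⟨hik, h1i, hval, hpre⟩ := ih nv0 hsome
      intro nv h
      rw [ht2] at h
      have hnv : nv = nv0 + G.w (r k).1 (act k) (r (k + 1)).1 := (Option.some.inj h).symm
      rw [ht1]
      have hsub : k + 1 - ((r k).2.1 + 1) = k - (r k).2.1 := by omega
      have hsk : k - (r k).2.1 + (r k).2.1 = k := by omega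
      have hws : G.winSum π act (k - (r k).2.1) ((r k).2.1 + 1) =
          G.winSum π act (k - (r k).2.1) (r k).2.1 +
            G.w (π k) (act k) (π (k + 1)) := by
        rw [winSum_succ, hsk]
      refine ⟨by omega, by omega, ?_, ?_⟩
      · rw [hsub, hws, ← hval, hnv]
      · intro j h1 h2
        rw [hsub]
        rcases Nat.lt_or_ge j ((r k).2.1 + 1) with hj | hj
        · exact hpre j h1 (by omega)
        · have : j = (r k).2.1 + 1 := by omega
          subst this
          rw [hws, ← hval]
          exact hlt
    · intro nv h
      rw [ht2] at h
      exact nomatch h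

section Greedy

variable (G : WGA) (lmax : ℕ) (act : ℕ → G.A) (π : ℕ → G.Q)

/-- Greedy step of 𝒩 along the concrete path `π`: extend the tracked window if possible. -/
noncomputable def gstep (k : ℕ) (s : NState G) : NState G :=
  (π (k + 1),
    match s.2.2 with
    | some nv =>
        if nv + G.w (π k) (act k) (π (k + 1)) < 0 ∧ s.2.1 < lmax then
          (s.2.1 + 1, some (nv + G.w (π k) (act k) (π (k + 1))))
        else if G.w (π k) (act k) (π (k + 1)) < 0 then
          (1, some (G.w (π k) (act k) (π (k + 1))))
        else (1, none)
    | none =>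
        if G.w (π k) (act k) (π (k + 1)) < 0 then
          (1, some (G.w (π k) (act k) (π (k + 1))))
        else (1, none))

/-- The greedy run of 𝒩 along `π`. -/
noncomputable def grun : ℕ → NState G
  | 0 => (G.qI, 1, none)
  | (k + 1) => gstep G lmax act π k (grun k)

variable {G lmax act π}

lemma grun_fst (hπ0 : π 0 = G.qI) (k : ℕ) : (grun G lmax act π k).1 = π k := by
  cases k with
  | zero => exact hπ0.symm
  | succ k => rfl

lemma grun_neg : ∀ k nv, (grun G lmax act π k).2.2 = some nv → nv < 0 := by
  intro k
  induction k with
  | zero => intro nv h; simp [grun] at h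
  | succ k ih =>
    intro nv h
    rw [grun] at h
    cases hn : (grun G lmax act π k).2.2 with
    | none =>
      simp only [gstep, hn] at h
      split_ifs at h with hw
      exact (Option.some.inj h) ▸ hw
    | some nv0 =>
      simp only [gstep, hn] at h
      split_ifs at h with h1 h2
      · exact (Option.some.inj h) ▸ h1.1
      · exact (Option.some.inj h) ▸ h2

lemma grun_le (hlmax : 1 ≤ lmax) : ∀ k, (grun G lmax act π k).2.1 ≤ lmax := by
  intro k
  cases k with
  | zero => exact hlmax
  | succ k =>
    rw [grun]
    cases hn : (grun G lmax act π k).2.2 with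
    | none =>
      simp only [gstep, hn]
      split_ifs <;> exact hlmax
    | some nv0 =>
      simp only [gstep, hn]
      split_ifs with h1
      · exact h1.2
      · exact hlmax
      · exact hlmax

lemma grun_trans (hπ0 : π 0 = G.qI) {obs : ℕ → Set G.Q}
    (hconc : G.Concretizes obs act π) (k : ℕ) :
    NTrans G lmax (grun G lmax act π k) (act k, obs (k + 1))
      (grun G lmax act π (k + 1)) := by
  have hf1 : (grun G lmax act π k).1 = π k := grun_fst hπ0 k
  have hf2 : (grun G lmax act π (k + 1)).1 = π (k + 1) := rfl
  refine ⟨by rw [hf1, hf2]; exact hconc.2 k, by rw [hf2]; exact hconc.1 (k + 1), ?_⟩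
  rw [hf1, hf2]
  rw [grun]
  cases hn : (grun G lmax act π k).2.2 with
  | none =>
    by_cases hw : G.w (π k) (act k) (π (k + 1)) < 0
    · left
      simp [gstep, hn, hw]
    · right; right
      refine ⟨hw, ?_, ?_, ?_⟩
      · intro nv hnv; exact nomatch hnv
      · simp [gstep, hn, hw]
      · simp [gstep, hn, hw]
  | some nv0 =>
    by_cases h1 : nv0 + G.w (π k) (act k) (π (k + 1)) < 0 ∧
        (grun G lmax act π k).2.1 < lmax
    · right; left
      exact ⟨nv0, rfl, h1.1, h1.2, by simp [gstep, hn, h1], by simp [gstep, hn, h1]⟩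
    · by_cases hw : G.w (π k) (act k) (π (k + 1)) < 0
      · left
        exact ⟨hw, by simp [gstep, hn, h1, hw], by simp [gstep, hn, h1, hw]⟩
      · right; right
        refine ⟨hw, ?_, by simp [gstep, hn, h1, hw], by simp [gstep, hn, h1, hw]⟩
        intro nv hnv
        rw [← Option.some.inj hnv]
        exact h1

/-- If `p` is a bad position (no good window), the greedy run hits an accepting
state within `lmax` steps after `p`. -/
lemma grun_bad_accept (hlmax : 1 ≤ lmax) (p : ℕ)
    (hbad : ∀ j, 1 ≤ j → j ≤ lmax → G.winSum π act p j < 0) :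
    ∃ t, p ≤ t ∧ t ≤ p + lmax ∧ (grun G lmax act π t).2.1 = lmax ∧
      (grun G lmax act π t).2.2 ≠ none := by
  have key : ∀ j, 1 ≤ j → j ≤ lmax →
      (∃ t, p ≤ t ∧ t ≤ p + j ∧ (grun G lmax act π t).2.1 = lmax ∧
        (grun G lmax act π t).2.2 ≠ none) ∨
      ∃ nv, (grun G lmax act π (p + j)).2.2 = some nv ∧
        j ≤ (grun G lmax act π (p + j)).2.1 ∧ nv ≤ G.winSum π act p j := by
    intro j
    induction j with
    | zero => omega
    | succ j ih =>
      intro _ h2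
      rcases Nat.eq_zero_or_pos j with hj0 | hj0
      · -- base case: j + 1 = 1, step at time p
        subst hj0
        have hw : G.w (π p) (act p) (π (p + 1)) < 0 := by
          have := hbad 1 le_rfl hlmax
          rwa [winSum_one] at this
        cases hn : (grun G lmax act π p).2.2 with
        | none =>
          right
          refine ⟨G.w (π p) (act p) (π (p + 1)), ?_, ?_, ?_⟩
          · rw [grun]; simp [gstep, hn, hw]
          · rw [grun]; simp [gstep, hn, hw]
          · rw [winSum_one]
        | some nv0 =>
          have hneg : nv0 < 0 := grun_neg p nv0 hn
          by_cases hi : (grun G lmax act π p).2.1 < lmax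
          · right
            have hc : nv0 + G.w (π p) (act p) (π (p + 1)) < 0 ∧
                (grun G lmax act π p).2.1 < lmax := ⟨by omega, hi⟩
            refine ⟨nv0 + G.w (π p) (act p) (π (p + 1)), ?_, ?_, ?_⟩
            · rw [grun]; simp [gstep, hn, hc]
            · rw [grun]; simp [gstep, hn, hc]
            · rw [winSum_one]; omega
          · left
            have hle := grun_le (π := π) (act := act) hlmax p
            exact ⟨p, le_rfl, by omega, by omega, by rw [hn]; exact Option.some_ne_none _⟩
      · rcases ih hj0 (by omega) with hacc | ⟨nv, hsome, hji, hle⟩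
        · left
          obtain ⟨t, ht1, ht2, ht3⟩ := hacc
          exact ⟨t, ht1, by omega, ht3⟩
        · have hwsum : nv + G.w (π (p + j)) (act (p + j)) (π (p + j + 1)) ≤
              G.winSum π act p (j + 1) := by
            rw [winSum_succ]; omega
          have hneg' : nv + G.w (π (p + j)) (act (p + j)) (π (p + j + 1)) < 0 :=
            lt_of_le_of_lt hwsum (hbad (j + 1) (by omega) h2)
          by_cases hi : (grun G lmax act π (p + j)).2.1 < lmax
          · right
            have hc : nv + G.w (π (p + j)) (act (p + j)) (π (p + j + 1)) < 0 ∧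
                (grun G lmax act π (p + j)).2.1 < lmax := ⟨hneg', hi⟩
            have hpj : p + (j + 1) = (p + j) + 1 := by omega
            rw [hpj]
            refine ⟨nv + G.w (π (p + j)) (act (p + j)) (π (p + j + 1)), ?_, ?_, ?_⟩
            · rw [grun]; simp [gstep, hsome, hc]
            · rw [grun]; simp only [gstep, hsome]; rw [if_pos hc]; omega
            · exact hwsum
          · left
            have hle' := grun_le (π := π) (act := act) hlmax (p + j)
            exact ⟨p + j, by omega, by omega, by omega,
              by rw [hsome]; exact Option.some_ne_none _⟩
  rcases key lmax hlmax le_rfl with hacc | ⟨nv, hsome, hji, _⟩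
  · exact hacc
  · have hle := grun_le (π := π) (act := act) hlmax (p + lmax)
    exact ⟨p + lmax, by omega, le_rfl, by omega, by rw [hsome]; exact Option.some_ne_none _⟩

end Greedy

end AuxNBA

/-- Proposition 3: 𝒩 accepts a play `ψ` (viewed as the word
`(σ₀,o₁)(σ₁,o₂)…`) iff `ψ ∉ Fix(0,lmax)`. -/
theorem automaton_N_language (G : WGA) (lmax : ℕ) (hlmax : 1 ≤ lmax)
    (hqI : ({G.qI} : Set G.Q) ∈ G.Obs)
    (obs : ℕ → Set G.Q) (act : ℕ → G.A) (hplay : G.IsPlay obs act) :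
    WGA.NAccepts G lmax (fun i => (act i, obs (i + 1))) ↔ ¬ G.Fix 0 lmax obs act := by
  constructor
  · rintro ⟨r, hr0, htr, hinf⟩ hFix
    set π : ℕ → G.Q := fun i => (r i).1 with hπ
    have hconc : G.Concretizes obs act π := by
      refine ⟨fun i => ?_, fun i => (htr i).1⟩
      cases i with
      | zero =>
        show (r 0).1 ∈ obs 0
        rw [hr0]
        exact hplay.2.1
      | succ i => exact (htr i).2.1
    obtain ⟨N, hN⟩ := hFix π hconc
    obtain ⟨k, hk, hk1, hk2⟩ := hinf (N + lmax)
    obtain ⟨nv, hnv⟩ := Option.ne_none_iff_exists'.1 hk2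
    obtain ⟨hik, h1i, hval, hpre⟩ := AuxNBA.run_inv G lmax r act obs hr0 htr k nv hnv
    rw [hk1] at hik hpre
    have hGW := hN (k - lmax) (by omega)
    exact (AuxNBA.not_GW_iff G lmax (k - lmax) π act).2 hpre hGW
  · intro hnF
    rw [WGA.Fix] at hnF
    push_neg at hnF
    obtain ⟨π, hconc, hbadinf⟩ := hnF
    have hobs0 : obs 0 = {G.qI} := by
      obtain ⟨o, _, huniq⟩ := G.obs_partition G.qI
      have h1 := huniq (obs 0) ⟨hplay.1 0, hplay.2.1⟩
      have h2 := huniq {G.qI} ⟨hqI, Set.mem_singleton _⟩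
      rw [h1, h2]
    have hπ0 : π 0 = G.qI := by
      have := hconc.1 0
      rwa [hobs0] at this
    refine ⟨AuxNBA.grun G lmax act π, rfl,
      fun k => AuxNBA.grun_trans hπ0 hconc k, ?_⟩
    intro N
    obtain ⟨p, hpN, hpbad⟩ := hbadinf N
    rw [AuxNBA.not_GW_iff] at hpbad
    obtain ⟨t, hpt, _, hacc1, hacc2⟩ := AuxNBA.grun_bad_accept hlmax p hpbad
    exact ⟨t, le_trans hpN hpt, hacc1, hacc2⟩
end

section
/- Let G be a WGA and lmax ≥ 1. For a play ψ and π ∈ γ(ψ), say that π merges with infinitely many violating paths if for all i ≥ 0 there exist j ≥ i, k ≥ j + lmax and χ ∈ γ(ψ[..k]) such that π and χ visit the same state at position k (π[k] = χ[k]) and χ ∉ GW(0,j,lmax). Then for every play ψ ∈ plays(G): there exists π ∈ γ(ψ) merging with infinitely many violating paths if and only if ψ ∉ UFix(0,lmax). -/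
open scoped Classical

section MergeAux

variable (G : WGA)

private lemma winSum_congr (χ₁ χ₂ : ℕ → G.Q) (act : ℕ → G.A) (j l : ℕ)
    (h : ∀ u, u ≤ j + l → χ₁ u = χ₂ u) :
    G.winSum χ₁ act j l = G.winSum χ₂ act j l := by
  unfold WGA.winSum
  refine Finset.sum_congr rfl fun t ht => ?_
  have ht' := Finset.mem_range.mp ht
  rw [h (j + t) (by omega), h (j + t + 1) (by omega)]

private lemma gw_congr (χ₁ χ₂ : ℕ → G.Q) (act : ℕ → G.A) (j lmax : ℕ)
    (h : ∀ u, u ≤ j + lmax → χ₁ u = χ₂ u) (hgw : G.GW 0 j lmax χ₁ act) :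
    G.GW 0 j lmax χ₂ act := by
  obtain ⟨l, hl1, hl2, hl3⟩ := hgw
  refine ⟨l, hl1, hl2, ?_⟩
  rwa [← winSum_congr G χ₁ χ₂ act j l (fun u hu => h u (by omega))]

/-- Live-and-marked states at time `k`, marking level `i`. -/
private noncomputable def LMset (lmax : ℕ) (obs : ℕ → Set G.Q) (act : ℕ → G.A)
    (i k : ℕ) : Finset G.Q :=
  Finset.univ.filter fun q =>
    (∃ ρ, G.Concretizes obs act ρ ∧ ρ k = q) ∧
    (∃ χ : ℕ → G.Q, ∃ j : ℕ, i ≤ j ∧ j + lmax ≤ k ∧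
      (∀ m, m ≤ k → χ m ∈ obs m) ∧
      (∀ m, m < k → G.Δ (χ m) (act m) (χ (m + 1))) ∧
      χ k = q ∧ ¬ G.GW 0 j lmax χ act)

private lemma LMset_anti (lmax : ℕ) (obs : ℕ → Set G.Q) (act : ℕ → G.A)
    {i i' : ℕ} (k : ℕ) (h : i ≤ i') :
    LMset G lmax obs act i' k ⊆ LMset G lmax obs act i k := by
  intro q hq
  rw [LMset, Finset.mem_filter] at hq ⊢
  obtain ⟨hu, hlive, χ, j, hij, hrest⟩ := hq
  exact ⟨hu, hlive, χ, j, le_trans h hij, hrest⟩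

private lemma LMset_self (lmax : ℕ) (obs : ℕ → Set G.Q) (act : ℕ → G.A)
    {i j : ℕ} {ρ : ℕ → G.Q} (hρ : G.Concretizes obs act ρ) (hij : i ≤ j)
    (hGW : ¬ G.GW 0 j lmax ρ act) :
    ∀ k, j + lmax ≤ k → ρ k ∈ LMset G lmax obs act i k := by
  intro k hk
  rw [LMset, Finset.mem_filter]
  exact ⟨Finset.mem_univ _, ⟨ρ, hρ, rfl⟩,
    ρ, j, hij, hk, fun m _ => hρ.1 m, fun m _ => hρ.2 m, rfl, hGW⟩

end MergeAux

/-- Lemma 10: a play `ψ` has a concretization merging with infinitely many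
violating paths iff `ψ ∉ UFix(0,lmax)`. -/
theorem merging_iff_not_ufix (G : WGA) (lmax : ℕ) (hlmax : 1 ≤ lmax)
    (obs : ℕ → Set G.Q) (act : ℕ → G.A) (hplay : G.IsPlay obs act) :
    (∃ π, G.Concretizes obs act π ∧
      ∀ i : ℕ, ∃ j k : ℕ, i ≤ j ∧ j + lmax ≤ k ∧
        ∃ χ : ℕ → G.Q,
          (∀ m, m ≤ k → χ m ∈ obs m) ∧
          (∀ m, m < k → G.Δ (χ m) (act m) (χ (m + 1))) ∧
          χ k = π k ∧ ¬ G.GW 0 j lmax χ act) ↔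
    ¬ G.UFix 0 lmax obs act := by
  constructor
  · rintro ⟨π, hπ, hmerge⟩ ⟨I, hU⟩
    obtain ⟨j, k, hIj, hjk, χ, hobs, htr, hχk, hGW⟩ := hmerge I
    set π' : ℕ → G.Q := fun m => if m < k then χ m else π m with hπ'def
    have hagree : ∀ u, u ≤ k → π' u = χ u := by
      intro u hu
      by_cases h : u < k
      · simp [hπ'def, h]
      · have huk : u = k := by omega
        simp [hπ'def, huk, ← hχk]
    have hπ'c : G.Concretizes obs act π' := by
      constructor
      · intro m
        by_cases h : m < k
        · simpa [hπ'def, h] using hobs m (le_of_lt h)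
        · simpa [hπ'def, h] using hπ.1 m
      · intro m
        rcases lt_or_ge m k with h | h
        · have h1 : π' m = χ m := hagree m h.le
          have h2 : π' (m + 1) = χ (m + 1) := hagree (m + 1) h
          rw [h1, h2]; exact htr m h
        · have h1 : π' m = π m := by simp [hπ'def]; omega
          have h2 : π' (m + 1) = π (m + 1) := by simp [hπ'def]; omega
          rw [h1, h2]; exact hπ.2 m
    have hgw' : G.GW 0 j lmax π' act := hU π' hπ'c j hIj
    exact hGW (gw_congr G π' χ act j lmax (fun u hu => hagree u (by omega)) hgw')
  · intro hnU
    have hnU' : ∀ i : ℕ, ∃ ρ : ℕ → G.Q, G.Concretizes obs act ρ ∧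
        ∃ j, i ≤ j ∧ ¬ G.GW 0 j lmax ρ act := by
      intro i
      by_contra hc
      push_neg at hc
      exact hnU ⟨i, hc⟩
    set c : ℕ → ℕ → ℕ := fun i k => (LMset G lmax obs act i k).card with hcdef
    set A : ℕ → Set ℕ := fun i => {n | ∀ K, ∃ k, K ≤ k ∧ c i k ≤ n} with hAdef
    have hAne : ∀ i, (A i).Nonempty := by
      intro i
      refine ⟨Fintype.card G.Q, fun K => ⟨K, le_refl K, ?_⟩⟩
      exact le_trans (Finset.card_le_univ _) (le_of_eq Finset.card_univ)
    set ν : ℕ → ℕ := fun i => sInf (A i) with hνdef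
    have hνmem : ∀ i, ν i ∈ A i := fun i => Nat.sInf_mem (hAne i)
    have hνanti : ∀ i i', i ≤ i' → ν i' ≤ ν i := by
      intro i i' h
      refine Nat.sInf_le ?_
      intro K
      obtain ⟨k, hk1, hk2⟩ := hνmem i K
      exact ⟨k, hk1, le_trans (Finset.card_le_card (LMset_anti G lmax obs act k h)) hk2⟩
    obtain ⟨istar, histar⟩ : ∃ i, ∀ i', i ≤ i' → ν i' = ν i := by
      have hr : (Set.range ν).Nonempty := ⟨ν 0, 0, rfl⟩
      obtain ⟨i0, hi0⟩ := Nat.sInf_mem hr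
      refine ⟨i0, fun i' h => le_antisymm (hνanti i0 i' h) ?_⟩
      · have h2 : sInf (Set.range ν) ≤ ν i' := Nat.sInf_le ⟨i', rfl⟩
        rw [← hi0] at h2; exact h2
    have hb : ∀ i, ∃ K, ∀ k, K ≤ k → ν i ≤ c i k := by
      intro i
      rcases Nat.eq_zero_or_pos (ν i) with h0 | hpos
      · exact ⟨0, fun k _ => by omega⟩
      · have hnot : (ν i - 1) ∉ A i := Nat.notMem_of_lt_sInf (by
          have h1 : ν i - 1 < ν i := by omega
          simpa [hνdef] using h1)
        simp only [hAdef, Set.mem_setOf_eq] at hnot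
        push_neg at hnot
        obtain ⟨K, hK⟩ := hnot
        exact ⟨K, fun k hk => by have := hK k hk; omega⟩
    obtain ⟨ρ, hρ, jstar, hjstar, hGWstar⟩ := hnU' istar
    refine ⟨ρ, hρ, ?_⟩
    intro i0
    obtain ⟨K1, hK1⟩ := hb (max i0 istar)
    obtain ⟨k, hk1, hk2⟩ := hνmem istar (max K1 (jstar + lmax))
    have hsub : LMset G lmax obs act (max i0 istar) k ⊆ LMset G lmax obs act istar k :=
      LMset_anti G lmax obs act k (le_max_right i0 istar)
    have hcard : (LMset G lmax obs act istar k).card ≤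
        (LMset G lmax obs act (max i0 istar) k).card := by
      have h1 := hK1 k (le_trans (le_max_left _ _) hk1)
      have hee : ν (max i0 istar) = ν istar := histar (max i0 istar) (le_max_right _ _)
      simp only [hcdef] at hk2 h1
      omega
    have heq := Finset.eq_of_subset_of_card_le hsub hcard
    have hmem : ρ k ∈ LMset G lmax obs act istar k :=
      LMset_self G lmax obs act hρ hjstar hGWstar k
        (le_trans (le_max_right _ _) hk1)
    rw [← heq, LMset, Finset.mem_filter] at hmem
    obtain ⟨-, -, χ, j, hij, hjlk, hobsχ, htrχ, hend, hGWχ⟩ := hmem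
    exact ⟨j, k, le_trans (le_max_left i0 istar) hij, hjlk, χ, hobsχ, htrχ, hend, hGWχ⟩
end
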